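/- After n recursive least-squares updates, the estimate ĥx_n equals the unique minimizer of the regularized weighted least-squares criterion Σ_{i=1}^n Σ_i^{-1} (y_i - C_i x)^2 + x^T Π^{-1} x, namely ĥx_n = (Π^{-1} + Σ_{i=1}^n Σ_i^{-1} C_i^T C_i)^{-1} Σ_{i=1}^n Σ_i^{-1} C_i^T y_i. -/

import Mathlib

open Matrix Finset

section helpers

variable {n : ℕ}

lemma vmv_mulVec (a b u : Fin n → ℝ) : vecMulVec a b *ᵥ u = (b ⬝ᵥ u) • a := by
  ext i
  simp only [mulVec, dotProduct, vecMulVec_apply, Pi.smul_apply, smul_eq_mul, Finset.sum_mul]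
  exact Finset.sum_congr rfl fun j _ => by ring

lemma vecMul_vmv (u a b : Fin n → ℝ) : u ᵥ* vecMulVec a b = (u ⬝ᵥ a) • b := by
  ext j
  simp only [vecMul, dotProduct, vecMulVec_apply, Pi.smul_apply, smul_eq_mul, Finset.sum_mul]
  exact Finset.sum_congr rfl fun i _ => by ring

lemma mul_vmv (M : Matrix (Fin n) (Fin n) ℝ) (a b : Fin n → ℝ) :
    M * vecMulVec a b = vecMulVec (M *ᵥ a) b := by
  ext i j
  simp only [mul_apply, vecMulVec_apply, mulVec, dotProduct, Finset.sum_mul]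
  exact Finset.sum_congr rfl fun k _ => by ring

lemma vmv_mul (a b : Fin n → ℝ) (M : Matrix (Fin n) (Fin n) ℝ) :
    vecMulVec a b * M = vecMulVec a (b ᵥ* M) := by
  ext i j
  simp only [mul_apply, vecMulVec_apply, vecMul, dotProduct, Finset.mul_sum]
  exact Finset.sum_congr rfl fun k _ => by ring

lemma vmv_smul_right (a : Fin n → ℝ) (t : ℝ) (b : Fin n → ℝ) :
    vecMulVec a (t • b) = t • vecMulVec a b := by
  ext i j
  simp only [vecMulVec_apply, Pi.smul_apply, smul_eq_mul, Matrix.smul_apply]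
  ring

lemma vmv_smul_left (a : Fin n → ℝ) (t : ℝ) (b : Fin n → ℝ) :
    vecMulVec (t • a) b = t • vecMulVec a b := by
  ext i j
  simp only [vecMulVec_apply, Pi.smul_apply, smul_eq_mul, Matrix.smul_apply]
  ring

lemma vmv_transpose (a b : Fin n → ℝ) : (vecMulVec a b)ᵀ = vecMulVec b a := by
  ext i j
  simp [vecMulVec_apply, mul_comm]

lemma dot_vmv_dot (c z : Fin n → ℝ) : z ⬝ᵥ (vecMulVec c c *ᵥ z) = (c ⬝ᵥ z) ^ 2 := by
  rw [vmv_mulVec, dotProduct_smul, smul_eq_mul, dotProduct_comm, sq]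

lemma vmv_posSemidef (c : Fin n → ℝ) (s : ℝ) (hs : 0 ≤ s) :
    (s • vecMulVec c c).PosSemidef := by
  rw [posSemidef_iff_dotProduct_mulVec]
  constructor
  · unfold Matrix.IsHermitian
    rw [conjTranspose_eq_transpose_of_trivial, transpose_smul, vmv_transpose]
  · intro z
    have hz : star z = z := by simp
    rw [hz, smul_mulVec, dotProduct_smul, dot_vmv_dot]
    exact smul_nonneg hs (sq_nonneg _)

end helpers

/-- After `N` recursive least-squares updates, the estimate `x̂ N` equals the unique
minimizer of the regularized weighted least-squares criterion
`∑_{i=1}^N Σᵢ⁻¹ (yᵢ - Cᵢ x)² + xᵀ Π⁻¹ x`, namely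
`x̂ N = (Π⁻¹ + ∑ Σᵢ⁻¹ Cᵢᵀ Cᵢ)⁻¹ ∑ Σᵢ⁻¹ Cᵢᵀ yᵢ`. -/
theorem rls_equals_regularized_least_squares
    {n : ℕ} (Pi : Matrix (Fin n) (Fin n) ℝ) (hPi : Pi.PosDef)
    (C : ℕ → (Fin n → ℝ)) (Sig : ℕ → ℝ) (hSig : ∀ i, 0 < Sig i) (y : ℕ → ℝ)
    (P : ℕ → Matrix (Fin n) (Fin n) ℝ) (xh : ℕ → (Fin n → ℝ))
    (hP0 : P 0 = Pi)
    (hPrec : ∀ i, P (i + 1) =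
      P i - (Sig (i + 1) + C (i + 1) ⬝ᵥ (P i *ᵥ C (i + 1)))⁻¹ •
        vecMulVec (P i *ᵥ C (i + 1)) ((C (i + 1)) ᵥ* (P i)))
    (hx0 : xh 0 = 0)
    (hxrec : ∀ i, xh (i + 1) =
      xh i + ((Sig (i + 1) + C (i + 1) ⬝ᵥ (P i *ᵥ C (i + 1)))⁻¹ *
        (y (i + 1) - C (i + 1) ⬝ᵥ xh i)) • (P i *ᵥ C (i + 1)))
    (N : ℕ) :
    xh N = (Pi⁻¹ + ∑ i ∈ Finset.Icc 1 N, (Sig i)⁻¹ • vecMulVec (C i) (C i))⁻¹ *ᵥ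
        (∑ i ∈ Finset.Icc 1 N, ((Sig i)⁻¹ * y i) • C i) ∧
      ∀ x : Fin n → ℝ, x ≠ xh N →
        (∑ i ∈ Finset.Icc 1 N, (Sig i)⁻¹ * (y i - C i ⬝ᵥ xh N) ^ 2) + xh N ⬝ᵥ (Pi⁻¹ *ᵥ xh N)
          < (∑ i ∈ Finset.Icc 1 N, (Sig i)⁻¹ * (y i - C i ⬝ᵥ x) ^ 2) + x ⬝ᵥ (Pi⁻¹ *ᵥ x) := by
  set A : ℕ → Matrix (Fin n) (Fin n) ℝ :=
    fun N => Pi⁻¹ + ∑ i ∈ Finset.Icc 1 N, (Sig i)⁻¹ • vecMulVec (C i) (C i) with hA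
  set b : ℕ → (Fin n → ℝ) :=
    fun N => ∑ i ∈ Finset.Icc 1 N, ((Sig i)⁻¹ * y i) • C i with hb
  -- key invariants
  have key : ∀ M, (A M).PosDef ∧ P M * A M = 1 ∧ A M * P M = 1 ∧ A M *ᵥ xh M = b M := by
    intro M
    induction M with
    | zero =>
      have hA0 : A 0 = Pi⁻¹ := by simp [hA]
      have hb0 : b 0 = 0 := by simp [hb]
      have hdet : IsUnit Pi.det := (Matrix.isUnit_iff_isUnit_det Pi).mp hPi.isUnit
      refine ⟨by rw [hA0]; exact hPi.inv, ?_, ?_, ?_⟩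
      · rw [hA0, hP0, Matrix.mul_nonsing_inv _ hdet]
      · rw [hA0, hP0, Matrix.nonsing_inv_mul _ hdet]
      · rw [hx0, hb0, mulVec_zero]
    | succ M ih =>
      obtain ⟨hApd, hPA, hAP, hAx⟩ := ih
      set c := C (M + 1) with hc
      set σ := Sig (M + 1) with hσ
      set Q := P M with hQ
      set d := σ + c ⬝ᵥ (Q *ᵥ c) with hd
      have hQinv : Q = (A M)⁻¹ := (Matrix.inv_eq_left_inv hPA).symm
      have hQpd : Q.PosDef := by rw [hQinv]; exact hApd.inv
      have hσ0 : (0:ℝ) < σ := hSig _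
      have hd0 : (0:ℝ) < d := by
        have h0 : 0 ≤ c ⬝ᵥ (Q *ᵥ c) := by
          have := hQpd.posSemidef.dotProduct_mulVec_nonneg c
          simpa using this
        rw [hd]; linarith
      have hσ' : σ ≠ 0 := ne_of_gt hσ0
      have hd' : d ≠ 0 := ne_of_gt hd0
      have hkd : c ⬝ᵥ (Q *ᵥ c) = d - σ := by rw [hd]; ring
      have hAsucc : A (M + 1) = A M + σ⁻¹ • vecMulVec c c := by
        simp only [hA]
        rw [Finset.sum_Icc_succ_top (Nat.one_le_iff_ne_zero.mpr (Nat.succ_ne_zero M)), add_assoc]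
      have hbsucc : b (M + 1) = b M + (σ⁻¹ * y (M + 1)) • c := by
        simp only [hb]
        rw [Finset.sum_Icc_succ_top (Nat.one_le_iff_ne_zero.mpr (Nat.succ_ne_zero M))]
      have hPsucc : P (M + 1) = Q - d⁻¹ • vecMulVec (Q *ᵥ c) (c ᵥ* Q) := hPrec M
      have hxsucc : xh (M + 1) = xh M + (d⁻¹ * (y (M + 1) - c ⬝ᵥ xh M)) • (Q *ᵥ c) := hxrec M
      -- positive definite
      have hApd' : (A (M + 1)).PosDef := by
        rw [hAsucc]
        exact hApd.add_posSemidef (vmv_posSemidef c σ⁻¹ (le_of_lt (inv_pos.mpr hσ0)))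
      -- P (M+1) * A (M+1) = 1
      have hPA' : P (M + 1) * A (M + 1) = 1 := by
        rw [hPsucc, hAsucc]
        simp only [Matrix.sub_mul, Matrix.mul_add, Matrix.add_mul, Matrix.smul_mul,
          Matrix.mul_smul, mul_vmv, vmv_mul, vmv_mulVec, smul_mulVec,
          Matrix.vecMul_vecMul, hPA, Matrix.vecMul_one,
          vecMul_vmv, ← Matrix.dotProduct_mulVec, vmv_smul_right, vmv_smul_left,
          Matrix.mulVec_mulVec, Matrix.one_mulVec, smul_smul, smul_sub, smul_add, hkd]
        match_scalars <;> field_simp <;> ring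
      -- A (M+1) * P (M+1) = 1
      have hAP' : A (M + 1) * P (M + 1) = 1 := by
        rw [hPsucc, hAsucc]
        simp only [Matrix.mul_sub, Matrix.mul_add, Matrix.add_mul, Matrix.smul_mul,
          Matrix.mul_smul, mul_vmv, vmv_mul, Matrix.vecMul_vecMul, Matrix.mulVec_mulVec,
          hAP, Matrix.one_mulVec, Matrix.vecMul_one, vecMul_vmv, vmv_mulVec,
          smul_mulVec, ← Matrix.dotProduct_mulVec, vmv_smul_right, vmv_smul_left,
          smul_smul, smul_sub, smul_add, hkd]
        match_scalars <;> field_simp <;> ring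
      -- A (M+1) *ᵥ xh (M+1) = b (M+1)
      have hAx' : A (M + 1) *ᵥ xh (M + 1) = b (M + 1) := by
        rw [hxsucc, hAsucc, hbsucc]
        simp only [add_mulVec, mulVec_add, mulVec_smul, smul_mulVec,
          Matrix.mulVec_mulVec, Matrix.add_mul, Matrix.smul_mul, mul_vmv, vmv_mul,
          vecMul_vmv, ← Matrix.dotProduct_mulVec,
          hAP, Matrix.one_mulVec, vmv_mulVec, hAx, smul_smul,
          smul_sub, smul_add, hkd]
        match_scalars <;> field_simp <;> ring
      exact ⟨hApd', hPA', hAP', hAx'⟩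
  obtain ⟨hApd, hPA, hAP, hAx⟩ := key N
  have hAinv : (A N)⁻¹ = P N := Matrix.inv_eq_right_inv hAP
  have hxeq : xh N = (A N)⁻¹ *ᵥ b N := by
    rw [hAinv, ← hAx, Matrix.mulVec_mulVec, hPA, Matrix.one_mulVec]
  refine ⟨hxeq, ?_⟩
  -- strict minimality
  have hAsymm : (A N)ᵀ = A N := by
    have := hApd.isHermitian
    rwa [Matrix.IsHermitian, conjTranspose_eq_transpose_of_trivial] at this
  have sum_mulVec' : ∀ (s : Finset ℕ) (f : ℕ → Matrix (Fin n) (Fin n) ℝ) (v : Fin n → ℝ),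
      (∑ i ∈ s, f i) *ᵥ v = ∑ i ∈ s, f i *ᵥ v := by
    intro s f v
    induction s using Finset.cons_induction with
    | empty => simp [Matrix.zero_mulVec]
    | cons a s ha ih => rw [Finset.sum_cons, Finset.sum_cons, add_mulVec, ih]
  have sum_dotProduct' : ∀ (s : Finset ℕ) (f : ℕ → (Fin n → ℝ)) (v : Fin n → ℝ),
      (∑ i ∈ s, f i) ⬝ᵥ v = ∑ i ∈ s, f i ⬝ᵥ v := by
    intro s f v
    induction s using Finset.cons_induction with
    | empty => simp
    | cons a s ha ih => rw [Finset.sum_cons, Finset.sum_cons, add_dotProduct, ih]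
  have dotProduct_sum' : ∀ (s : Finset ℕ) (v : Fin n → ℝ) (f : ℕ → (Fin n → ℝ)),
      v ⬝ᵥ (∑ i ∈ s, f i) = ∑ i ∈ s, v ⬝ᵥ f i := by
    intro s v f
    induction s using Finset.cons_induction with
    | empty => simp
    | cons a s ha ih => rw [Finset.sum_cons, Finset.sum_cons, dotProduct_add, ih]
  have expand : ∀ z : Fin n → ℝ,
      (∑ i ∈ Finset.Icc 1 N, (Sig i)⁻¹ * (y i - C i ⬝ᵥ z) ^ 2) + z ⬝ᵥ (Pi⁻¹ *ᵥ z)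
        = z ⬝ᵥ (A N *ᵥ z) - 2 * (b N ⬝ᵥ z) + ∑ i ∈ Finset.Icc 1 N, (Sig i)⁻¹ * (y i) ^ 2 := by
    intro z
    have h1 : z ⬝ᵥ (A N *ᵥ z)
        = z ⬝ᵥ (Pi⁻¹ *ᵥ z) + ∑ i ∈ Finset.Icc 1 N, (Sig i)⁻¹ * (C i ⬝ᵥ z) ^ 2 := by
      rw [hA, add_mulVec, dotProduct_add, sum_mulVec', dotProduct_sum']
      congr 1
      refine Finset.sum_congr rfl fun i _ => ?_
      rw [smul_mulVec, dotProduct_smul, dot_vmv_dot, smul_eq_mul]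
    have h2 : b N ⬝ᵥ z = ∑ i ∈ Finset.Icc 1 N, (Sig i)⁻¹ * y i * (C i ⬝ᵥ z) := by
      rw [hb, sum_dotProduct']
      exact Finset.sum_congr rfl fun i _ => by rw [smul_dotProduct, smul_eq_mul]
    rw [h1, h2]
    have h3 : ∑ i ∈ Finset.Icc 1 N, (Sig i)⁻¹ * (y i - C i ⬝ᵥ z) ^ 2
        = ∑ i ∈ Finset.Icc 1 N, ((Sig i)⁻¹ * (C i ⬝ᵥ z) ^ 2 - 2 * ((Sig i)⁻¹ * y i * (C i ⬝ᵥ z))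
            + (Sig i)⁻¹ * (y i) ^ 2) := by
      refine Finset.sum_congr rfl fun i _ => by ring
    rw [h3, Finset.sum_add_distrib, Finset.sum_sub_distrib, ← Finset.mul_sum]
    ring
  intro x hx
  set v := x - xh N with hv
  have hvne : v ≠ 0 := sub_ne_zero.mpr hx
  have hq : 0 < v ⬝ᵥ (A N *ᵥ v) := by
    have := hApd.dotProduct_mulVec_pos hvne
    simpa using this
  have e1 : x ⬝ᵥ (A N *ᵥ xh N) = b N ⬝ᵥ x := by rw [hAx, dotProduct_comm]
  have e2 : xh N ⬝ᵥ (A N *ᵥ x) = b N ⬝ᵥ x := by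
    rw [Matrix.dotProduct_mulVec, ← hAsymm, Matrix.vecMul_transpose, hAx]
  have e3 : xh N ⬝ᵥ (A N *ᵥ xh N) = b N ⬝ᵥ xh N := by rw [hAx, dotProduct_comm]
  have e4 : v ⬝ᵥ (A N *ᵥ v) = x ⬝ᵥ (A N *ᵥ x) - x ⬝ᵥ (A N *ᵥ xh N)
      - xh N ⬝ᵥ (A N *ᵥ x) + xh N ⬝ᵥ (A N *ᵥ xh N) := by
    rw [hv, mulVec_sub, sub_dotProduct, dotProduct_sub, dotProduct_sub]
    ring
  have hfx := expand x
  have hfxh := expand (xh N)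
  linarith
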